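/- With notation as in the staircase lemma, the coefficient c_k of x^k in P(x) = Σ_{r=1}^m x^{α_r}(1+x)^{β_r} equals Σ_{r=1}^m C(β_r, k − α_r), c_k = 0 for k < α_m, and c_k > 0 for all α_m ≤ k ≤ α_m + β_m = deg P. -/
import Mathlib


open Finset Polynomial

/-- Coefficient extraction and no-internal-zeros for the staircase polynomial
`P(x) = Σ_{r=1}^m x^{α_r}(1+x)^{β_r}`: `c_k = Σ_r C(β_r, k - α_r)`, `c_k = 0` for
`k < α_m`, and `c_k > 0` for `α_m ≤ k ≤ α_m + β_m = deg P`. -/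
theorem staircase_coefficients (m : ℕ) (hm : 1 ≤ m) (α β : ℕ → ℕ)
    (hα : ∀ r, 1 ≤ r → r < m → α (r + 1) ≤ α r)
    (hα1 : 1 ≤ α m)
    (hβ : ∀ r, 1 ≤ r → r < m → β r < β (r + 1))
    (hstair : ∀ r, 1 ≤ r → r < m → α (r + 1) + β (r + 1) = α r + β r + 1) :
    letI P : Polynomial ℕ := ∑ r ∈ Finset.Icc 1 m, X ^ (α r) * (1 + X) ^ (β r)
    (∀ k : ℕ, P.coeff k
        = ∑ r ∈ Finset.Icc 1 m, if α r ≤ k then (β r).choose (k - α r) else 0)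
    ∧ (∀ k : ℕ, k < α m → P.coeff k = 0)
    ∧ (∀ k : ℕ, α m ≤ k → k ≤ α m + β m → 0 < P.coeff k)
    ∧ P.natDegree = α m + β m := by
  set P : Polynomial ℕ := ∑ r ∈ Finset.Icc 1 m, X ^ (α r) * (1 + X) ^ (β r) with hP
  have mono : ∀ s, 1 ≤ s → ∀ t, s ≤ t → t ≤ m →
      α t ≤ α s ∧ α s + β s ≤ α t + β t := by
    intro s hs t hst
    induction t, hst using Nat.le_induction with
    | base => intro _; exact ⟨le_rfl, le_rfl⟩
    | succ t ht ih =>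
      intro htm
      have htm' : t < m := lt_of_lt_of_le (Nat.lt_succ_self t) htm
      have ht1 : 1 ≤ t := hs.trans ht
      obtain ⟨h1, h2⟩ := ih htm'.le
      refine ⟨(hα t ht1 htm').trans h1, ?_⟩
      calc α s + β s ≤ α t + β t := h2
        _ ≤ α t + β t + 1 := Nat.le_succ _
        _ = α (t + 1) + β (t + 1) := (hstair t ht1 htm').symm
  have hcoeff : ∀ k, P.coeff k
      = ∑ r ∈ Finset.Icc 1 m, if α r ≤ k then (β r).choose (k - α r) else 0 := by
    intro k
    rw [Polynomial.finset_sum_coeff]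
    refine Finset.sum_congr rfl fun r _ => ?_
    rw [mul_comm, Polynomial.coeff_mul_X_pow']
    split
    · rw [Polynomial.coeff_one_add_X_pow]; norm_cast
    · rfl
  refine ⟨hcoeff, ?_, ?_, ?_⟩
  · intro k hk
    rw [hcoeff]
    refine Finset.sum_eq_zero fun r hr => ?_
    rw [Finset.mem_Icc] at hr
    have := (mono r hr.1 m hr.2 le_rfl).1
    rw [if_neg]
    omega
  · intro k hk1 hk2
    rw [hcoeff]
    refine Finset.sum_pos' (fun i _ => Nat.zero_le _) ⟨m, Finset.mem_Icc.mpr ⟨hm, le_rfl⟩, ?_⟩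
    rw [if_pos hk1]
    exact Nat.choose_pos (by omega)
  · refine le_antisymm ?_ ?_
    · rw [Polynomial.natDegree_le_iff_coeff_eq_zero]
      intro N hN
      rw [hcoeff]
      refine Finset.sum_eq_zero fun r hr => ?_
      rw [Finset.mem_Icc] at hr
      have := (mono r hr.1 m hr.2 le_rfl).2
      split
      · exact Nat.choose_eq_zero_of_lt (by omega)
      · rfl
    · refine Polynomial.le_natDegree_of_ne_zero ?_
      rw [hcoeff]
      have : 0 < ∑ r ∈ Finset.Icc 1 m,
          if α r ≤ α m + β m then (β r).choose (α m + β m - α r) else 0 := by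
        refine Finset.sum_pos' (fun i _ => Nat.zero_le _)
          ⟨m, Finset.mem_Icc.mpr ⟨hm, le_rfl⟩, ?_⟩
        rw [if_pos (Nat.le_add_right _ _)]
        exact Nat.choose_pos (by omega)
      omega
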